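/- Chain rule identity: for any n×n complex matrix V, any positive definite n×n matrix X, and any ω ∈ ℝ, one has ∫₀¹ e^{ω(s-1/2)} X^s ( V·log(e^{-ω/2} X) − log(e^{ω/2} X)·V ) X^{1-s} ds = e^{-ω/2} V X − e^{ω/2} X V. -/

import Mathlib

open Matrix
open scoped ComplexOrder

attribute [local instance] Matrix.frobeniusNormedAddCommGroup Matrix.frobeniusNormedSpace

/-- Matrix logarithm via continuous functional calculus. -/
noncomputable def mlog {n : ℕ} (A : Matrix (Fin n) (Fin n) ℂ) : Matrix (Fin n) (Fin n) ℂ :=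
  cfc Real.log A

/-- Real matrix power via continuous functional calculus. -/
noncomputable def mpow {n : ℕ} (A : Matrix (Fin n) (Fin n) ℂ) (s : ℝ) :
    Matrix (Fin n) (Fin n) ℂ :=
  cfc (fun x : ℝ => x ^ s) A

lemma g_eq (ω a b : ℝ) (ha : 0 < a) (hb : 0 < b) (s : ℝ) :
    Real.exp (ω * (s - 1/2)) * a ^ s * b ^ (1 - s) * (Real.log b - Real.log a - ω)
      = (Real.exp (-ω/2 + Real.log b) * -(ω + Real.log a - Real.log b)) *
          Real.exp ((ω + Real.log a - Real.log b) * s) := by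
  rw [Real.rpow_def_of_pos ha, Real.rpow_def_of_pos hb, ← Real.exp_add, ← Real.exp_add]
  have h : ω * (s - 1/2) + Real.log a * s + Real.log b * (1 - s)
      = -ω/2 + Real.log b + (ω + Real.log a - Real.log b) * s := by ring
  rw [h, Real.exp_add]; ring

lemma key_scalar (ω a b : ℝ) (ha : 0 < a) (hb : 0 < b) :
    ∫ s in (0:ℝ)..1,
        Real.exp (ω * (s - 1/2)) * a ^ s * b ^ (1 - s) * (Real.log b - Real.log a - ω)
      = Real.exp (-ω/2) * b - Real.exp (ω/2) * a := by
  set k : ℝ := ω + Real.log a - Real.log b with hk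
  set C : ℝ := Real.exp (-ω/2 + Real.log b) with hC
  rw [intervalIntegral.integral_congr (g := fun s => (C * -k) * Real.exp (k * s))
    (fun s _ => g_eq ω a b ha hb s)]
  have hF : ∀ s ∈ Set.uIcc (0:ℝ) 1,
      HasDerivAt (fun t => -(C * Real.exp (k * t))) ((C * -k) * Real.exp (k * s)) s := by
    intro s _
    have h1 : HasDerivAt (fun t : ℝ => k * t) k s := by
      simpa using (hasDerivAt_id s).const_mul k
    have h2 := (Real.hasDerivAt_exp (k * s)).comp s h1
    have := (h2.const_mul C).neg
    exact this.congr_deriv (by ring)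
  have hint : IntervalIntegrable (fun s => (C * -k) * Real.exp (k * s)) MeasureTheory.volume 0 1 :=
    (by fun_prop : Continuous fun s : ℝ => (C * -k) * Real.exp (k * s)).intervalIntegrable 0 1
  rw [intervalIntegral.integral_eq_sub_of_hasDerivAt hF hint]
  have h3 : C * Real.exp k = Real.exp (ω/2) * a := by
    rw [hC, hk, ← Real.exp_add]
    have : -ω/2 + Real.log b + (ω + Real.log a - Real.log b) = ω/2 + Real.log a := by ring
    rw [this, Real.exp_add, Real.exp_log ha]
  have h4 : C = Real.exp (-ω/2) * b := by rw [hC, Real.exp_add, Real.exp_log hb]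
  simp only [mul_one, mul_zero, Real.exp_zero]
  linarith [h3, h4]

lemma ssb {n : ℕ} (c : Matrix (Fin n) (Fin n) ℂ) :
    ∑ p : Fin n, ∑ q : Fin n, c p q • Matrix.single p q (1:ℂ) = c := by
  conv_rhs => rw [matrix_eq_sum_single c]
  simp only [smul_single, smul_eq_mul, mul_one]

lemma sum_conj_std {n : ℕ} (U c : Matrix (Fin n) (Fin n) ℂ) :
    ∑ p : Fin n, ∑ q : Fin n, c p q • (U * Matrix.single p q (1:ℂ) * star U)
      = U * c * star U := by
  conv_rhs => rw [← ssb c]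
  simp only [Matrix.mul_sum, Matrix.sum_mul]
  refine Finset.sum_congr rfl fun p _ => Finset.sum_congr rfl fun q _ => ?_
  rw [Matrix.mul_smul, Matrix.smul_mul]

theorem chain_rule_identity {n : ℕ}
    (V X : Matrix (Fin n) (Fin n) ℂ) (hX : X.PosDef) (ω : ℝ) :
    ∫ s in (0:ℝ)..1, Real.exp (ω * (s - 1/2)) •
        (mpow X s *
          (V * mlog ((Real.exp (-ω/2) : ℂ) • X) - mlog ((Real.exp (ω/2) : ℂ) • X) * V) *
          mpow X (1 - s))
      = (Real.exp (-ω/2) : ℂ) • (V * X) - (Real.exp (ω/2) : ℂ) • (X * V) := by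
  have hA : X.IsHermitian := hX.1
  set U : Matrix (Fin n) (Fin n) ℂ := (hA.eigenvectorUnitary : Matrix (Fin n) (Fin n) ℂ)
    with hUdef
  set d : Fin n → ℝ := hA.eigenvalues with hddef
  have hdp : ∀ i, 0 < d i := fun i => hX.eigenvalues_pos i
  have hU1 : star U * U = 1 := Unitary.star_mul_self_of_mem (SetLike.coe_mem _)
  have hU2 : U * star U = 1 := Unitary.mul_star_self_of_mem (SetLike.coe_mem _)
  have hU1' : ∀ B : Matrix (Fin n) (Fin n) ℂ, star U * (U * B) = B := fun B => by
    rw [← Matrix.mul_assoc, hU1, Matrix.one_mul]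
  have hU2' : ∀ B : Matrix (Fin n) (Fin n) ℂ, U * (star U * B) = B := fun B => by
    rw [← Matrix.mul_assoc, hU2, Matrix.one_mul]
  -- diagonalization of mpow
  have hpow : ∀ s : ℝ, mpow X s
      = U * diagonal (fun i => ((d i ^ s : ℝ) : ℂ)) * star U := by
    intro s
    rw [mpow, hA.cfc_eq]
    rfl
  -- diagonalization of mlog of the scaled matrix
  have hlog : ∀ c : ℝ, mlog ((Real.exp c : ℂ) • X)
      = U * diagonal (fun i => ((c + Real.log (d i) : ℝ) : ℂ)) * star U := by
    intro c
    have hsa : IsSelfAdjoint X := hA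
    have hspec : spectrum ℝ X = Set.range hA.eigenvalues := hA.spectrum_real_eq_range_eigenvalues
    have hposspec : ∀ x ∈ spectrum ℝ X, 0 < x := by
      rw [hspec]; rintro x ⟨i, rfl⟩; exact hX.eigenvalues_pos i
    have hc1 : ContinuousOn Real.log ((fun x => Real.exp c * x) '' spectrum ℝ X) := by
      apply Real.continuousOn_log.mono
      rintro y ⟨x, hx, rfl⟩
      exact ne_of_gt (mul_pos (Real.exp_pos c) (hposspec x hx))
    have hsmul : (Real.exp c : ℂ) • X = (Real.exp c : ℝ) • X := by
      ext i j; simp [Matrix.smul_apply, Complex.real_smul]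
    rw [mlog, hsmul, ← cfc_comp_const_mul (Real.exp c) Real.log X hc1 hsa]
    rw [cfc_congr (g := fun x : ℝ => c + Real.log x)
      (fun x hx => by rw [Real.log_mul (ne_of_gt (Real.exp_pos c)) (ne_of_gt (hposspec x hx)),
        Real.log_exp])]
    rw [hA.cfc_eq]
    rfl
  set W : Matrix (Fin n) (Fin n) ℂ := star U * V * U with hW
  -- the pointwise decomposition of the integrand
  have claim : ∀ s : ℝ, Real.exp (ω * (s - 1/2)) •
        (mpow X s *
          (V * mlog ((Real.exp (-ω/2) : ℂ) • X) - mlog ((Real.exp (ω/2) : ℂ) • X) * V) *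
          mpow X (1 - s))
      = ∑ p : Fin n, ∑ q : Fin n,
          (((Real.exp (ω * (s - 1/2)) * d p ^ s * d q ^ (1 - s) *
              (Real.log (d q) - Real.log (d p) - ω) : ℝ) : ℂ) * W p q) •
            (U * Matrix.single p q (1:ℂ) * star U) := by
    intro s
    rw [hpow s, hpow (1 - s), hlog (-ω/2), hlog (ω/2)]
    have e1 : (U * diagonal (fun i => ((d i ^ s : ℝ) : ℂ)) * star U) *
          (V * (U * diagonal (fun i => ((-ω/2 + Real.log (d i) : ℝ) : ℂ)) * star U)
            - (U * diagonal (fun i => ((ω/2 + Real.log (d i) : ℝ) : ℂ)) * star U) * V) *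
          (U * diagonal (fun i => ((d i ^ (1 - s) : ℝ) : ℂ)) * star U)
        = U * (diagonal (fun i => ((d i ^ s : ℝ) : ℂ)) *
            (W * diagonal (fun i => ((-ω/2 + Real.log (d i) : ℝ) : ℂ))
              - diagonal (fun i => ((ω/2 + Real.log (d i) : ℝ) : ℂ)) * W) *
            diagonal (fun i => ((d i ^ (1 - s) : ℝ) : ℂ))) * star U := by
      simp only [hW, Matrix.mul_sub, Matrix.sub_mul, Matrix.mul_assoc, hU1']
    rw [e1, ← Matrix.smul_mul, ← Matrix.mul_smul]
    have e2 : Real.exp (ω * (s - 1/2)) •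
          (diagonal (fun i => ((d i ^ s : ℝ) : ℂ)) *
            (W * diagonal (fun i => ((-ω/2 + Real.log (d i) : ℝ) : ℂ))
              - diagonal (fun i => ((ω/2 + Real.log (d i) : ℝ) : ℂ)) * W) *
            diagonal (fun i => ((d i ^ (1 - s) : ℝ) : ℂ)))
        = Matrix.of fun p q =>
            ((Real.exp (ω * (s - 1/2)) * d p ^ s * d q ^ (1 - s) *
                (Real.log (d q) - Real.log (d p) - ω) : ℝ) : ℂ) * W p q := by
      ext i j
      simp only [Matrix.smul_apply, Matrix.diagonal_mul, Matrix.mul_diagonal, Matrix.sub_apply,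
        Matrix.of_apply]
      rw [Complex.real_smul]
      push_cast
      ring
    rw [e2, ← sum_conj_std U]
    simp only [Matrix.of_apply]
  rw [intervalIntegral.integral_congr (fun s _ => claim s)]
  simp only [← Finset.sum_product']
  rw [intervalIntegral.integral_finset_sum]
  · have hterm : ∀ p q : Fin n,
        (∫ s in (0:ℝ)..1,
          (((Real.exp (ω * (s - 1/2)) * d p ^ s * d q ^ (1 - s) *
              (Real.log (d q) - Real.log (d p) - ω) : ℝ) : ℂ) * W p q) •
            (U * Matrix.single p q (1:ℂ) * star U))
        = (((Real.exp (-ω/2) * d q - Real.exp (ω/2) * d p : ℝ) : ℂ) * W p q) •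
            (U * Matrix.single p q (1:ℂ) * star U) := by
      intro p q
      rw [intervalIntegral.integral_smul_const, intervalIntegral.integral_mul_const,
        intervalIntegral.integral_ofReal, key_scalar ω (d p) (d q) (hdp p) (hdp q)]
    simp only [hterm]
    rw [Finset.sum_product]
    have h5 := sum_conj_std U (Matrix.of fun p q =>
      ((Real.exp (-ω/2) * d q - Real.exp (ω/2) * d p : ℝ) : ℂ) * W p q)
    simp only [Matrix.of_apply] at h5
    rw [h5]
    have hXd : X = U * diagonal (fun i => ((d i : ℝ) : ℂ)) * star U := by
      conv_lhs => rw [hA.spectral_theorem]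
      rfl
    have hsd : (Matrix.of fun p q =>
          ((Real.exp (-ω/2) * d q - Real.exp (ω/2) * d p : ℝ) : ℂ) * W p q)
        = (Real.exp (-ω/2) : ℂ) • (W * diagonal (fun i => ((d i : ℝ) : ℂ)))
          - (Real.exp (ω/2) : ℂ) • (diagonal (fun i => ((d i : ℝ) : ℂ)) * W) := by
      ext i j
      simp only [Matrix.of_apply, Matrix.sub_apply, Matrix.smul_apply, Matrix.mul_diagonal,
        Matrix.diagonal_mul, smul_eq_mul]
      push_cast
      ring
    rw [hsd]
    have hVX : U * (W * diagonal (fun i => ((d i : ℝ) : ℂ))) * star U = V * X := by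
      rw [hW]
      conv_rhs => rw [hXd]
      simp only [Matrix.mul_assoc, hU2']
    have hXV : U * (diagonal (fun i => ((d i : ℝ) : ℂ)) * W) * star U = X * V := by
      rw [hW]
      conv_rhs => rw [hXd]
      simp only [Matrix.mul_assoc, hU2, hU2', Matrix.mul_one]
    rw [Matrix.mul_sub, Matrix.sub_mul, Matrix.mul_smul, Matrix.smul_mul, hVX,
      Matrix.mul_smul, Matrix.smul_mul, hXV]
  · rintro ⟨p, q⟩ -
    apply Continuous.intervalIntegrable
    have hgr : Continuous fun s : ℝ =>
        Real.exp (ω * (s - 1/2)) * d p ^ s * d q ^ (1 - s) *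
          (Real.log (d q) - Real.log (d p) - ω) :=
      Continuous.congr (by fun_prop) (fun s => (g_eq ω (d p) (d q) (hdp p) (hdp q) s).symm)
    exact ((Complex.continuous_ofReal.comp hgr).mul continuous_const).smul continuous_const
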